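/- If φ is a one-to-one differentiable function of θ, then the moment matching prior transforms as π_M(φ) = π_M(θ)|dθ/dφ|^{3/2}; in particular, the moment matching prior is NOT invariant under one-to-one reparameterization (it does not transform with the Jacobian |dθ/dφ|). -/

import Mathlib

open Real

/-- **Transformation law (non-invariance) of the moment matching prior.**
With the moment matching prior characterized by `π_M'/π_M = g₃/(2I)` in each
parameterization, and the transformation rules `I_φ = I(θ) θ'²`,
`g₃,φ = g₃(θ) θ'³ + 3 I(θ) θ' θ''` under the one-to-one differentiable
reparameterization `φ ↦ θ(φ)`, the prior transforms as
`π_M(φ) = C · π_M(θ(φ)) · |dθ/dφ|^{3/2}` — i.e. with the 3/2 power of the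
Jacobian rather than the Jacobian itself, so it is not invariant. -/
theorem moment_matching_prior_transformation
    (θ : ℝ → ℝ) (hθ : ContDiff ℝ 2 θ) (hθ' : ∀ x, 0 < deriv θ x)
    (I g₃ Iφ g₃φ : ℝ → ℝ)
    (hIpos : ∀ t, 0 < I t) (hIdiff : Differentiable ℝ I)
    (hIφ : ∀ x, Iφ x = I (θ x) * (deriv θ x) ^ 2)
    (hg₃φ : ∀ x, g₃φ x = g₃ (θ x) * (deriv θ x) ^ 3
      + 3 * I (θ x) * deriv θ x * deriv (deriv θ) x)
    (pθ pφ : ℝ → ℝ)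
    (hpθpos : ∀ t, 0 < pθ t) (hpθdiff : Differentiable ℝ pθ)
    (hpφpos : ∀ x, 0 < pφ x) (hpφdiff : Differentiable ℝ pφ)
    (hpθ : ∀ t, deriv pθ t / pθ t = g₃ t / (2 * I t))
    (hpφ : ∀ x, deriv pφ x / pφ x = g₃φ x / (2 * Iφ x)) :
    ∃ C : ℝ, 0 < C ∧ ∀ x, pφ x = C * pθ (θ x) * |deriv θ x| ^ ((3 : ℝ) / 2) := by
  have hθdiff : Differentiable ℝ θ := hθ.differentiable (by norm_num)
  have hθ'diff : Differentiable ℝ (deriv θ) := by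
    have h : ContDiff ℝ ((1 : WithTop ℕ∞) + 1) θ := by exact_mod_cast hθ
    exact (contDiff_succ_iff_deriv.mp h).2.2.differentiable (by norm_num)
  set D : ℝ → ℝ := fun x => pθ (θ x) * (deriv θ x) ^ ((3:ℝ)/2) with hD
  have hDpos : ∀ x, 0 < D x := fun x =>
    mul_pos (hpθpos _) (rpow_pos_of_pos (hθ' x) _)
  have key : ∀ x, HasDerivAt (fun x => pφ x / D x) 0 x := by
    intro x
    have ha := hθ' x
    have hθx : HasDerivAt θ (deriv θ x) x := (hθdiff x).hasDerivAt
    have hθ''x : HasDerivAt (deriv θ) (deriv (deriv θ) x) x := (hθ'diff x).hasDerivAt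
    have hpθc : HasDerivAt (fun y => pθ (θ y)) (deriv pθ (θ x) * deriv θ x) x :=
      (hpθdiff (θ x)).hasDerivAt.comp x hθx
    have hr : HasDerivAt (fun y => (deriv θ y) ^ ((3:ℝ)/2))
        (deriv (deriv θ) x * ((3:ℝ)/2) * (deriv θ x) ^ ((3:ℝ)/2 - 1)) x :=
      hθ''x.rpow_const (Or.inl ha.ne')
    have hDx : HasDerivAt D
        (deriv pθ (θ x) * deriv θ x * (deriv θ x) ^ ((3:ℝ)/2)
          + pθ (θ x) * (deriv (deriv θ) x * ((3:ℝ)/2) * (deriv θ x) ^ ((3:ℝ)/2 - 1))) x :=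
      hpθc.mul hr
    have hpφx : HasDerivAt pφ (deriv pφ x) x := (hpφdiff x).hasDerivAt
    have hdiv := hpφx.div hDx (hDpos x).ne'
    have hnum : (deriv pφ x * D x - pφ x * (deriv pθ (θ x) * deriv θ x * (deriv θ x) ^ ((3:ℝ)/2)
          + pθ (θ x) * (deriv (deriv θ) x * ((3:ℝ)/2) * (deriv θ x) ^ ((3:ℝ)/2 - 1))))
          / (D x) ^ 2 = 0 := by
      have hIa := hIpos (θ x)
      have hpθa := hpθpos (θ x)
      have hpφa := hpφpos x
      have e1 : deriv pφ x = pφ x * (g₃φ x / (2 * Iφ x)) := by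
        rw [← hpφ x]; field_simp
      have e2 : deriv pθ (θ x) = pθ (θ x) * (g₃ (θ x) / (2 * I (θ x))) := by
        rw [← hpθ (θ x)]; field_simp
      set a := deriv θ x with haa
      set s := a ^ ((1:ℝ)/2) with hs
      have hspos : 0 < s := rpow_pos_of_pos ha _
      have hs2 : s ^ 2 = a := by
        rw [hs, ← rpow_natCast (a ^ ((1:ℝ)/2)) 2, ← rpow_mul ha.le]
        norm_num
      have hs3 : a ^ ((3:ℝ)/2) = s ^ 3 := by
        rw [hs, ← rpow_natCast (a ^ ((1:ℝ)/2)) 3, ← rpow_mul ha.le]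
        norm_num
      have hs1 : a ^ ((3:ℝ)/2 - 1) = s := by
        rw [hs]; norm_num
      rw [e1, e2, hg₃φ x, hIφ x, hs3, hs1, hD]
      simp only [hs3, ← hs2]
      rw [div_eq_zero_iff]
      left
      have hd : deriv θ x = s ^ 2 := by rw [← haa]; exact hs2.symm
      field_simp
      rw [hd]
      rw [show (s ^ 2) ^ ((3:ℝ)/2) = s ^ 3 from by rw [hs2]; exact hs3]
      field_simp
      ring
    have : (deriv pφ x * D x - pφ x * (deriv pθ (θ x) * deriv θ x * (deriv θ x) ^ ((3:ℝ)/2)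
          + pθ (θ x) * (deriv (deriv θ) x * ((3:ℝ)/2) * (deriv θ x) ^ ((3:ℝ)/2 - 1))))
          / (D x) ^ 2 = 0 := hnum
    rw [this] at hdiv
    exact hdiv
  have hdiffG : Differentiable ℝ (fun x => pφ x / D x) := fun x => (key x).differentiableAt
  have hderivG : ∀ x, deriv (fun x => pφ x / D x) x = 0 := fun x => (key x).deriv
  have hconst := is_const_of_deriv_eq_zero hdiffG hderivG
  refine ⟨pφ 0 / D 0, div_pos (hpφpos 0) (hDpos 0), fun x => ?_⟩
  have := hconst x 0
  have habs : |deriv θ x| = deriv θ x := abs_of_pos (hθ' x)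
  rw [habs]
  have hx : pφ x = (pφ 0 / D 0) * D x := by
    rw [div_mul_eq_mul_div, eq_div_iff (hDpos 0).ne']
    exact (div_eq_div_iff (hDpos x).ne' (hDpos 0).ne').mp this
  rw [hx, hD]; ring
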